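/- Let f : {0,1}^n → {0,1} and let M ⊆ [n] be the variable set of a monomial of maximal degree d = deg(f) appearing with nonzero coefficient in the multilinear expansion of f. Then for every assignment α : M → {0,1}, the restricted function f_α satisfies bs(f_α) ≤ bs(f) − 1. -/
import Mathlib


open Finset
open scoped Classical

namespace BF

noncomputable section

/-- flip the bits of `x` belonging to `B`. -/
def flipS {n : ℕ} (x : Fin n → Bool) (B : Finset (Fin n)) : Fin n → Bool :=
  fun i => if i ∈ B then !(x i) else x i

/-- flip the `i`-th bit of `x`. -/
def flip1 {n : ℕ} (x : Fin n → Bool) (i : Fin n) : Fin n → Bool :=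
  fun j => if j = i then !(x j) else x j

/-- real value of a boolean. -/
def bval (b : Bool) : ℝ := if b then 1 else 0

/-- coefficient of the monomial `∏_{i ∈ S} x_i` in the unique multilinear
real polynomial expansion of `f` (Möbius inversion over the subcube lattice). -/
def coeffS {n : ℕ} (f : (Fin n → Bool) → ℝ) (S : Finset (Fin n)) : ℝ :=
  ∑ T ∈ S.powerset, (-1 : ℝ) ^ (S.card - T.card) * f (fun i => decide (i ∈ T))

/-- degree of the multilinear expansion of a real-valued function on the cube. -/
def degF {n : ℕ} (f : (Fin n → Bool) → ℝ) : ℕ :=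
  (Finset.univ.filter fun S : Finset (Fin n) => coeffS f S ≠ 0).sup Finset.card

/-- degree of a boolean function. -/
def degB {n : ℕ} (f : (Fin n → Bool) → Bool) : ℕ := degF (fun x => bval (f x))

/-- block sensitivity of `f` at `x`. -/
def bsAt {n : ℕ} (f : (Fin n → Bool) → Bool) (x : Fin n → Bool) : ℕ :=
  (Finset.univ.filter fun 𝓑 : Finset (Finset (Fin n)) =>
      (∀ B ∈ 𝓑, f (flipS x B) ≠ f x) ∧
      ∀ A ∈ 𝓑, ∀ B ∈ 𝓑, A ≠ B → Disjoint A B).sup Finset.card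

/-- block sensitivity of `f`. -/
def bs {n : ℕ} (f : (Fin n → Bool) → Bool) : ℕ := Finset.univ.sup (bsAt f)

/-- sensitivity of `f` at `x`. -/
def sx {n : ℕ} (f : (Fin n → Bool) → Bool) (x : Fin n → Bool) : ℕ :=
  (Finset.univ.filter fun i => f (flip1 x i) ≠ f x).card

/-- (maximum) sensitivity of `f`. -/
def sens {n : ℕ} (f : (Fin n → Bool) → Bool) : ℕ := Finset.univ.sup (sx f)

/-- coordinate `i` is relevant for `f`. -/
def Rel {n : ℕ} (i : Fin n) (f : (Fin n → Bool) → Bool) : Prop :=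
  ∃ x, f (flip1 x i) ≠ f x

/-- the set of relevant coordinates of `f`. -/
def relSet {n : ℕ} (f : (Fin n → Bool) → Bool) : Finset (Fin n) :=
  Finset.univ.filter fun i => Rel i f

/-- the number of relevant variables `n(f)`. -/
def nrel {n : ℕ} (f : (Fin n → Bool) → Bool) : ℕ := (relSet f).card

/-- influence of coordinate `i` on `f` (uniform distribution). -/
def infl {n : ℕ} (f : (Fin n → Bool) → Bool) (i : Fin n) : ℝ :=
  ((Finset.univ.filter fun x : Fin n → Bool => f x ≠ f (flip1 x i)).card : ℝ) / 2 ^ n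

/-- total influence `I[f]`. -/
def totalInf {n : ℕ} (f : (Fin n → Bool) → Bool) : ℝ := ∑ i, infl f i

/-- restriction of `f` fixing the coordinates in `H` according to `α`
(viewed as a function on the full cube not depending on the coordinates in `H`). -/
def restrict {n : ℕ} (f : (Fin n → Bool) → Bool) (H : Finset (Fin n))
    (α : Fin n → Bool) : (Fin n → Bool) → Bool :=
  fun x => f (fun i => if i ∈ H then α i else x i)

/-- certificate complexity of `f` at `x`. -/
def certAt {n : ℕ} (f : (Fin n → Bool) → Bool) (x : Fin n → Bool) : ℕ :=
  sInf {k | ∃ S : Finset (Fin n), S.card = k ∧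
    ∀ y, (∀ i ∈ S, y i = x i) → f y = f x}

/-- certificate complexity `C(f)`. -/
def certC {n : ℕ} (f : (Fin n → Bool) → Bool) : ℕ := Finset.univ.sup (certAt f)

/-- `f` is in standard form: `f(0) = 0` and `f(e_i) = 1` for every basis vector. -/
def stdForm {b : ℕ} (f : (Fin b → Bool) → Bool) : Prop :=
  f (fun _ => false) = false ∧ ∀ i : Fin b, f (fun j => decide (j = i)) = true

end

end BF

open BF

namespace Stmt8Aux

open Finset
variable {n : ℕ}

lemma neg_one_pow_sum (P : Finset (Fin n)) :
    ∑ R ∈ P.powerset, (-1 : ℝ) ^ R.card = if P = ∅ then 1 else 0 := by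
  have h := Finset.sum_powerset_neg_one_pow_card (x := P)
  have h2 := congrArg (fun z : ℤ => (z : ℝ)) h
  push_cast at h2
  split_ifs at h2 ⊢ with hc <;> simp_all

lemma sum_over_supersets (U T : Finset (Fin n)) (hT : T ⊆ U) (g : Finset (Fin n) → ℝ) :
    ∑ S ∈ U.powerset.filter (fun S => T ⊆ S), g S = ∑ R ∈ (U \ T).powerset, g (T ∪ R) := by
  refine Finset.sum_nbij' (fun S => S \ T) (fun R => T ∪ R) ?_ ?_ ?_ ?_ ?_
  · intro S hS
    simp only [mem_filter, mem_powerset] at hS ⊢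
    exact sdiff_subset_sdiff hS.1 le_rfl
  · intro R hR
    simp only [mem_powerset] at hR
    simp only [mem_filter, mem_powerset]
    exact ⟨union_subset hT (hR.trans sdiff_subset), subset_union_left⟩
  · intro S hS
    simp only [mem_filter, mem_powerset] at hS
    exact union_sdiff_of_subset hS.2
  · intro R hR
    simp only [mem_powerset] at hR
    have hd : Disjoint T R := (Finset.sdiff_disjoint.mono_left hR).symm
    exact union_sdiff_cancel_left hd
  · intro S hS
    simp only [mem_filter, mem_powerset] at hS
    rw [union_sdiff_of_subset hS.2]

lemma neg_one_pow_sub {p r : ℕ} (h : r ≤ p) : (-1 : ℝ) ^ (p - r) = (-1) ^ p * (-1) ^ r := by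
  have h1 : ((-1 : ℝ) ^ r) * ((-1) ^ r) = 1 := by
    rw [← pow_add]
    exact Even.neg_one_pow ⟨r, rfl⟩
  calc (-1 : ℝ) ^ (p - r) = (-1 : ℝ) ^ (p - r) * (((-1 : ℝ) ^ r) * ((-1) ^ r)) := by
        rw [h1, mul_one]
    _ = ((-1 : ℝ) ^ (p - r) * (-1 : ℝ) ^ r) * (-1) ^ r := by ring
    _ = (-1 : ℝ) ^ p * (-1) ^ r := by rw [← pow_add, Nat.sub_add_cancel h]

lemma alt_sum (M A : Finset (Fin n)) (hA : A ⊆ M) (c : ℝ) :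
    ∑ T ∈ M.powerset, (-1 : ℝ) ^ (M.card - T.card) * (if A ⊆ T then c else 0)
      = if A = M then c else 0 := by
  have step1 : ∀ T ∈ M.powerset, (-1 : ℝ) ^ (M.card - T.card) * (if A ⊆ T then c else 0)
      = if A ⊆ T then (-1 : ℝ) ^ (M.card - T.card) * c else 0 := by
    intro T _; split <;> simp
  rw [Finset.sum_congr rfl step1, ← Finset.sum_filter, sum_over_supersets M A hA]
  have hP : ∀ R ∈ (M \ A).powerset, (-1 : ℝ) ^ (M.card - (A ∪ R).card) * c
      = (((-1 : ℝ) ^ ((M \ A).card)) * c) * (-1 : ℝ) ^ R.card := by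
    intro R hR
    simp only [mem_powerset] at hR
    have hd : Disjoint A R := (Finset.sdiff_disjoint.mono_left hR).symm
    have hcard : M.card - (A ∪ R).card = (M \ A).card - R.card := by
      rw [Finset.card_union_of_disjoint hd, Finset.card_sdiff_of_subset hA]
      omega
    have hle : R.card ≤ (M \ A).card := Finset.card_le_card hR
    rw [hcard, neg_one_pow_sub hle]
    ring
  rw [Finset.sum_congr rfl hP, ← Finset.mul_sum, neg_one_pow_sum]
  by_cases h : A = M
  · subst h; simp
  · have hne : M \ A ≠ ∅ := fun he => h (subset_antisymm hA (sdiff_eq_empty_iff_subset.mp he))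
    simp [hne, h]

lemma expand (F : (Fin n → Bool) → ℝ) (U : Finset (Fin n)) :
    F (fun i => decide (i ∈ U)) = ∑ S ∈ U.powerset, BF.coeffS F S := by
  unfold BF.coeffS
  have h1 : ∀ S ∈ U.powerset,
      (∑ T ∈ S.powerset, (-1 : ℝ) ^ (S.card - T.card) * F (fun i => decide (i ∈ T)))
      = ∑ T ∈ U.powerset,
          if T ⊆ S then (-1 : ℝ) ^ (S.card - T.card) * F (fun i => decide (i ∈ T)) else 0 := by
    intro S hS
    rw [← Finset.sum_filter]
    apply Finset.sum_congr _ (fun _ _ => rfl)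
    ext T
    simp only [mem_filter, mem_powerset] at *
    exact ⟨fun h => ⟨h.trans hS, h⟩, fun h => h.2⟩
  rw [Finset.sum_congr rfl h1, Finset.sum_comm]
  have h2 : ∀ T ∈ U.powerset,
      (∑ S ∈ U.powerset,
        if T ⊆ S then (-1 : ℝ) ^ (S.card - T.card) * F (fun i => decide (i ∈ T)) else 0)
      = if T = U then F (fun i => decide (i ∈ T)) else 0 := by
    intro T hT
    simp only [mem_powerset] at hT
    rw [← Finset.sum_filter, sum_over_supersets U T hT]
    have h3 : ∀ R ∈ (U \ T).powerset, (-1 : ℝ) ^ ((T ∪ R).card - T.card) * F (fun i => decide (i ∈ T))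
        = F (fun i => decide (i ∈ T)) * (-1 : ℝ) ^ R.card := by
      intro R hR
      simp only [mem_powerset] at hR
      have hd : Disjoint T R := (Finset.sdiff_disjoint.mono_left hR).symm
      rw [Finset.card_union_of_disjoint hd, Nat.add_sub_cancel_left]
      ring
    rw [Finset.sum_congr rfl h3, ← Finset.mul_sum, neg_one_pow_sum]
    by_cases h : T = U
    · subst h; simp
    · have hne : U \ T ≠ ∅ := fun he => h (subset_antisymm hT (sdiff_eq_empty_iff_subset.mp he))
      simp [hne, h]
  rw [Finset.sum_congr rfl h2, Finset.sum_ite_eq' U.powerset U]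
  simp

lemma eq_indicator (z : Fin n → Bool) :
    z = fun i => decide (i ∈ Finset.univ.filter (fun i => z i = true)) := by
  funext i
  simp only [mem_filter, mem_univ, true_and]
  cases z i <;> simp

lemma const_of_degzero (F : (Fin n → Bool) → ℝ)
    (h : ∀ S : Finset (Fin n), S ≠ ∅ → BF.coeffS F S = 0) (z w : Fin n → Bool) :
    F z = F w := by
  have key : ∀ v : Fin n → Bool, F v = BF.coeffS F ∅ := by
    intro v
    have h1 := expand F (Finset.univ.filter (fun i => v i = true))
    rw [← eq_indicator v] at h1
    rw [h1, Finset.sum_eq_single ∅ (fun S _ hSne => h S hSne)]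
    intro h0
    exact absurd (Finset.mem_powerset.mpr (Finset.empty_subset _)) h0
  rw [key z, key w]

lemma deriv_const (F : (Fin n → Bool) → ℝ) (M : Finset (Fin n))
    (hdeg : ∀ S : Finset (Fin n), M ⊆ S → S ≠ M → BF.coeffS F S = 0)
    (x : Fin n → Bool) :
    ∑ T ∈ M.powerset, (-1 : ℝ) ^ (M.card - T.card)
        * F (fun i => if i ∈ M then decide (i ∈ T) else x i)
      = BF.coeffS F M := by
  classical
  set X : Finset (Fin n) := Finset.univ.filter (fun i => i ∉ M ∧ x i = true) with hX
  have hXM : ∀ i ∈ X, i ∉ M := by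
    intro i hi
    simp only [hX, mem_filter] at hi
    exact hi.2.1
  have hpoint : ∀ T ∈ M.powerset,
      (fun i => if i ∈ M then decide (i ∈ T) else x i) = (fun i => decide (i ∈ T ∪ X)) := by
    intro T hT
    simp only [mem_powerset] at hT
    funext i
    by_cases hi : i ∈ M
    · have hiX : i ∉ X := fun h => hXM i h hi
      simp [hi, Finset.mem_union, hiX]
    · have hiT : i ∉ T := fun h => hi (hT h)
      have hiX : i ∈ X ↔ x i = true := by simp [hX, hi]
      simp only [hi, if_false, Finset.mem_union, hiT, false_or]
      cases hxi : x i
      · simp [hiX, hxi]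
      · simp [hiX, hxi]
  have hextend : ∀ T : Finset (Fin n), (∑ S ∈ (T ∪ X).powerset, BF.coeffS F S)
      = ∑ S ∈ (Finset.univ : Finset (Fin n)).powerset,
          if S ⊆ T ∪ X then BF.coeffS F S else 0 := by
    intro T
    rw [← Finset.sum_filter]
    apply Finset.sum_congr _ (fun _ _ => rfl)
    ext S
    simp only [Finset.mem_filter, Finset.mem_powerset]
    exact ⟨fun h => ⟨Finset.subset_univ S, h⟩, fun h => h.2⟩
  have hinner : ∀ S ∈ (Finset.univ : Finset (Fin n)).powerset,
      (∑ T ∈ M.powerset, (-1 : ℝ) ^ (M.card - T.card) * (if S ⊆ T ∪ X then BF.coeffS F S else 0))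
      = if S = M then BF.coeffS F M else 0 := by
    intro S _
    by_cases hSX : S \ M ⊆ X
    · have step : ∀ T ∈ M.powerset,
          (-1 : ℝ) ^ (M.card - T.card) * (if S ⊆ T ∪ X then BF.coeffS F S else 0)
          = (-1 : ℝ) ^ (M.card - T.card) * (if S ∩ M ⊆ T then BF.coeffS F S else 0) := by
        intro T hT
        simp only [mem_powerset] at hT
        have hiff : S ⊆ T ∪ X ↔ S ∩ M ⊆ T := by
          constructor
          · intro h i hi
            have hi1 := Finset.mem_inter.mp hi
            rcases Finset.mem_union.mp (h hi1.1) with h' | h'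
            · exact h'
            · exact absurd hi1.2 (hXM i h')
          · intro h i hi
            by_cases him : i ∈ M
            · exact Finset.mem_union_left _ (h (Finset.mem_inter.mpr ⟨hi, him⟩))
            · exact Finset.mem_union_right _ (hSX (Finset.mem_sdiff.mpr ⟨hi, him⟩))
        rw [if_congr hiff rfl rfl]
      rw [Finset.sum_congr rfl step, alt_sum M (S ∩ M) Finset.inter_subset_right]
      by_cases hSM : S ∩ M = M
      · have hMS : M ⊆ S := by
          intro i hi
          have : i ∈ S ∩ M := hSM.symm ▸ hi
          exact (Finset.mem_inter.mp this).1
        by_cases hSeq : S = M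
        · subst hSeq; simp
        · rw [if_pos hSM, if_neg hSeq, hdeg S hMS hSeq]
      · have hne : S ≠ M := fun h => hSM (by subst h; simp)
        simp [hSM, hne]
    · have hz : ∀ T ∈ M.powerset,
          (-1 : ℝ) ^ (M.card - T.card) * (if S ⊆ T ∪ X then BF.coeffS F S else 0) = 0 := by
        intro T hT
        simp only [mem_powerset] at hT
        have hns : ¬ S ⊆ T ∪ X := by
          intro h
          apply hSX
          intro i hi
          have hi1 := Finset.mem_sdiff.mp hi
          rcases Finset.mem_union.mp (h hi1.1) with h' | h'
          · exact absurd (hT h') hi1.2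
          · exact h'
        simp [hns]
      rw [Finset.sum_eq_zero hz]
      have hne : S ≠ M := by
        intro h
        apply hSX
        subst h
        simp
      simp [hne]
  calc ∑ T ∈ M.powerset, (-1 : ℝ) ^ (M.card - T.card)
        * F (fun i => if i ∈ M then decide (i ∈ T) else x i)
      = ∑ T ∈ M.powerset, ∑ S ∈ (Finset.univ : Finset (Fin n)).powerset,
          (-1 : ℝ) ^ (M.card - T.card) * (if S ⊆ T ∪ X then BF.coeffS F S else 0) := by
        refine Finset.sum_congr rfl fun T hT => ?_
        rw [hpoint T hT, expand F (T ∪ X), hextend T, Finset.mul_sum]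
    _ = ∑ S ∈ (Finset.univ : Finset (Fin n)).powerset, ∑ T ∈ M.powerset,
          (-1 : ℝ) ^ (M.card - T.card) * (if S ⊆ T ∪ X then BF.coeffS F S else 0) :=
        Finset.sum_comm
    _ = ∑ S ∈ (Finset.univ : Finset (Fin n)).powerset,
          (if S = M then BF.coeffS F M else 0) := Finset.sum_congr rfl hinner
    _ = BF.coeffS F M := by
        rw [Finset.sum_ite_eq' _ M]
        simp

lemma exists_flip (f : (Fin n → Bool) → Bool) (M : Finset (Fin n))
    (hM : BF.coeffS (fun x => BF.bval (f x)) M ≠ 0) (hMne : M.Nonempty)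
    (hdeg : ∀ S : Finset (Fin n), M ⊆ S → S ≠ M →
      BF.coeffS (fun x => BF.bval (f x)) S = 0)
    (y : Fin n → Bool) :
    ∃ B : Finset (Fin n), B ⊆ M ∧ B.Nonempty ∧ f (BF.flipS y B) ≠ f y := by
  by_contra hcon
  push_neg at hcon
  have hall : ∀ B : Finset (Fin n), B ⊆ M → f (BF.flipS y B) = f y := by
    intro B hB
    rcases B.eq_empty_or_nonempty with hBe | hBne
    · subst hBe
      have hq : BF.flipS y ∅ = y := by funext i; simp [BF.flipS]
      rw [hq]
    · exact hcon B hB hBne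
  have hterm : ∀ T ∈ M.powerset,
      BF.bval (f (fun i => if i ∈ M then decide (i ∈ T) else y i))
        = BF.bval (f y) := by
    intro T hT
    simp only [mem_powerset] at hT
    set B : Finset (Fin n) := M.filter (fun i => decide (i ∈ T) ≠ y i) with hB
    have hBM : B ⊆ M := Finset.filter_subset _ _
    have hpt : (fun i => if i ∈ M then decide (i ∈ T) else y i) = BF.flipS y B := by
      funext i
      simp only [BF.flipS, hB, Finset.mem_filter]
      by_cases hi : i ∈ M
      · by_cases hne : decide (i ∈ T) = y i
        · simp only [hi, if_true]
          rw [if_neg (by simp [hi, hne])]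
          exact hne
        · rw [if_pos hi, if_pos ⟨hi, hne⟩]
          cases hyi : y i <;> cases hdt : decide (i ∈ T) <;> simp_all
      · rw [if_neg hi, if_neg (by simp [hi])]
    rw [hpt, hall B hBM]
  have hd := deriv_const (fun x => BF.bval (f x)) M hdeg y
  rw [Finset.sum_congr rfl (fun T hT => by rw [hterm T hT])] at hd
  have halt := alt_sum M ∅ (Finset.empty_subset M) (BF.bval (f y))
  simp only [Finset.empty_subset, if_true] at halt
  rw [halt] at hd
  rw [if_neg (by intro h; exact absurd h.symm (Finset.nonempty_iff_ne_empty.mp hMne))] at hd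
  exact hM hd.symm

end Stmt8Aux

open Stmt8Aux


/-- restricting all the variables of a maximum-degree monomial of `f`
decreases block sensitivity. -/
theorem stmt8 {n : ℕ} (f : (Fin n → Bool) → Bool) (M : Finset (Fin n))
    (hM : coeffS (fun x => bval (f x)) M ≠ 0) (hMd : M.card = degB f)
    (α : Fin n → Bool) :
    bs (restrict f M α) ≤ bs f - 1 := by
  classical
  have hdeg : ∀ S : Finset (Fin n), M ⊆ S → S ≠ M →
      coeffS (fun x => bval (f x)) S = 0 := by
    intro S hMS hne
    by_contra hc
    have h1 : S.card ≤ degB f := by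
      unfold degB degF
      exact Finset.le_sup (Finset.mem_filter.mpr ⟨Finset.mem_univ S, hc⟩)
    have h2 : M ⊂ S := Finset.ssubset_iff_subset_ne.mpr ⟨hMS, fun h => hne h.symm⟩
    have h3 := Finset.card_lt_card h2
    omega
  rcases M.eq_empty_or_nonempty with hMe | hMne
  · -- degenerate case: M = ∅, f is constant
    subst hMe
    have hconst : ∀ z w : Fin n → Bool, f z = f w := by
      intro z w
      have := const_of_degzero (fun x => bval (f x))
        (fun S hS => hdeg S (Finset.empty_subset S) hS) z w
      cases hz : f z <;> cases hw : f w <;> simp_all [bval]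
    have hbs : bs f = 0 := by
      apply Nat.le_zero.mp
      apply Finset.sup_le
      intro x _
      apply Finset.sup_le
      intro 𝓑 h𝓑
      rcases 𝓑.eq_empty_or_nonempty with h | ⟨B, hB⟩
      · simp [h]
      · exfalso
        exact ((Finset.mem_filter.mp h𝓑).2.1 B hB) (hconst _ _)
    have hbs2 : bs (restrict f ∅ α) = 0 := by
      apply Nat.le_zero.mp
      apply Finset.sup_le
      intro x _
      apply Finset.sup_le
      intro 𝓑 h𝓑
      rcases 𝓑.eq_empty_or_nonempty with h | ⟨B, hB⟩
      · simp [h]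
      · exfalso
        exact ((Finset.mem_filter.mp h𝓑).2.1 B hB) (hconst _ _)
    omega
  · -- main case
    have key : ∀ x : Fin n → Bool, bsAt (restrict f M α) x < bs f := by
      intro x
      set r := BF.restrict f M α with hr
      set y : Fin n → Bool := fun i => if i ∈ M then α i else x i with hy
      -- extract an optimal family for r at x
      have hne : (Finset.univ.filter fun 𝓑 : Finset (Finset (Fin n)) =>
          (∀ B ∈ 𝓑, r (flipS x B) ≠ r x) ∧
          ∀ A ∈ 𝓑, ∀ B ∈ 𝓑, A ≠ B → Disjoint A B).Nonempty := by
        refine ⟨∅, ?_⟩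
        simp
      obtain ⟨𝓑, h𝓑mem, h𝓑card⟩ := Finset.exists_mem_eq_sup _ hne Finset.card
      obtain ⟨-, hsens, hdisj⟩ :
          𝓑 ∈ Finset.univ ∧ (∀ B ∈ 𝓑, r (flipS x B) ≠ r x) ∧
            ∀ A ∈ 𝓑, ∀ B ∈ 𝓑, A ≠ B → Disjoint A B := by
        simpa [Finset.mem_filter] using h𝓑mem
      -- flipping within M does not change r
      have fact1 : ∀ B : Finset (Fin n), r (flipS x B) = r (flipS x (B \ M)) := by
        intro B
        simp only [hr, BF.restrict]
        congr 1
        funext i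
        by_cases hi : i ∈ M
        · simp [hi]
        · simp only [hi, if_false, flipS, Finset.mem_sdiff]
          by_cases hiB : i ∈ B <;> simp [hiB, hi]
      have fact2 : ∀ B ∈ 𝓑, (B \ M).Nonempty := by
        intro B hB
        rw [Finset.nonempty_iff_ne_empty]
        intro hBM
        apply hsens B hB
        rw [fact1 B, hBM]
        have hq : flipS x (∅ : Finset (Fin n)) = x := by funext i; simp [flipS]
        rw [hq]
      -- flips disjoint from M, moved to the point y
      have fact3 : ∀ C : Finset (Fin n), (∀ i ∈ C, i ∉ M) →
          r (flipS x C) = f (flipS y C) := by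
        intro C hC
        simp only [hr, BF.restrict]
        congr 1
        funext i
        by_cases hi : i ∈ M
        · have hiC : i ∉ C := fun h => hC i h hi
          simp [hi, flipS, hiC, hy]
        · simp [hi, flipS, hy]
      have hry : r x = f y := rfl
      -- the extra block inside M
      obtain ⟨B₀, hB₀M, hB₀ne, hB₀sens⟩ := exists_flip f M hM hMne hdeg y
      -- build the family for f at y
      set 𝓑' : Finset (Finset (Fin n)) := insert B₀ (𝓑.image (· \ M)) with h𝓑'
      have himinj : ∀ B ∈ 𝓑, ∀ B' ∈ 𝓑, B \ M = B' \ M → B = B' := by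
        intro B hB B' hB' heq
        by_contra hne2
        obtain ⟨i, hi⟩ := fact2 B hB
        have hi2 : i ∈ B' \ M := heq ▸ hi
        exact Finset.disjoint_left.mp (hdisj B hB B' hB' hne2)
          (Finset.mem_sdiff.mp hi).1 (Finset.mem_sdiff.mp hi2).1
      have hB₀notim : B₀ ∉ 𝓑.image (· \ M) := by
        intro h
        obtain ⟨B, hB, hBeq⟩ := Finset.mem_image.mp h
        obtain ⟨i, hi⟩ := hB₀ne
        have : i ∈ B \ M := hBeq ▸ hi
        exact (Finset.mem_sdiff.mp this).2 (hB₀M hi)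
      have hcard' : 𝓑'.card = 𝓑.card + 1 := by
        rw [h𝓑', Finset.card_insert_of_notMem hB₀notim,
          Finset.card_image_of_injOn (fun B hB B' hB' h => himinj B hB B' hB' h)]
      -- 𝓑' is a valid family for f at y
      have hmem' : 𝓑' ∈ Finset.univ.filter fun 𝓒 : Finset (Finset (Fin n)) =>
          (∀ B ∈ 𝓒, f (flipS y B) ≠ f y) ∧
          ∀ A ∈ 𝓒, ∀ B ∈ 𝓒, A ≠ B → Disjoint A B := by
        rw [Finset.mem_filter]
        refine ⟨Finset.mem_univ _, ?_, ?_⟩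
        · intro B hB
          rw [h𝓑', Finset.mem_insert] at hB
          rcases hB with rfl | hB
          · exact hB₀sens
          · obtain ⟨C, hC, rfl⟩ := Finset.mem_image.mp hB
            have hdisjM : ∀ i ∈ C \ M, i ∉ M := fun i hi => (Finset.mem_sdiff.mp hi).2
            rw [← fact3 _ hdisjM, ← fact1 C, ← hry]
            exact hsens C hC
        · intro A hA B hB hAB
          rw [h𝓑', Finset.mem_insert] at hA hB
          rcases hA with rfl | hA
          · rcases hB with rfl | hB
            · exact absurd rfl hAB
            · obtain ⟨C, hC, rfl⟩ := Finset.mem_image.mp hB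
              rw [Finset.disjoint_left]
              intro i hi hiC
              exact (Finset.mem_sdiff.mp hiC).2 (hB₀M hi)
          · rcases hB with rfl | hB
            · obtain ⟨C, hC, rfl⟩ := Finset.mem_image.mp hA
              rw [Finset.disjoint_left]
              intro i hi hiB
              exact (Finset.mem_sdiff.mp hi).2 (hB₀M hiB)
            · obtain ⟨C, hC, rfl⟩ := Finset.mem_image.mp hA
              obtain ⟨C', hC', rfl⟩ := Finset.mem_image.mp hB
              have hCC' : C ≠ C' := fun h => hAB (by rw [h])
              exact Finset.disjoint_of_subset_left Finset.sdiff_subset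
                (Finset.disjoint_of_subset_right Finset.sdiff_subset
                  (hdisj C hC C' hC' hCC'))
      have h1 : 𝓑'.card ≤ bsAt f y := Finset.le_sup hmem'
      have h2 : bsAt f y ≤ bs f := Finset.le_sup (Finset.mem_univ y)
      have h3 : bsAt r x = 𝓑.card := h𝓑card
      omega
    have : bs (restrict f M α) ≤ bs f - 1 := by
      apply Finset.sup_le
      intro x _
      have := key x
      omega
    exact this
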